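/- Let U ⊆ ℝⁿ be a bounded open set and let f : ℝⁿ → ℝ be integrable on U. Let 𝒜 be the set of all functions w : ℝⁿ → ℝ that are 1-Lipschitz (with respect to the Euclidean distance) and vanish at every point of the complement of U. Then the Kantorovich functional K[w] := ∫_U w f dx attains its supremum over 𝒜, i.e. there exists u ∈ 𝒜 with ∫_U u f dx = sup_{w ∈ 𝒜} ∫_U w f dx. -/

import Mathlib

set_option maxHeartbeats 1000000


open MeasureTheory

/-- Existence of a Kantorovich potential (Theorem 1.2): the Kantorovich functional
`K[w] = ∫_U w f` attains its supremum over the admissible set of 1-Lipschitz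
functions vanishing outside the bounded open set `U`. -/
theorem kantorovich_potential_exists (n : ℕ) (hn : 1 ≤ n)
    (U : Set (EuclideanSpace ℝ (Fin n))) (hUopen : IsOpen U)
    (hUbdd : Bornology.IsBounded U)
    (f : EuclideanSpace ℝ (Fin n) → ℝ) (hf : IntegrableOn f U) :
    ∃ u : EuclideanSpace ℝ (Fin n) → ℝ,
      (LipschitzWith 1 u ∧ ∀ x ∉ U, u x = 0) ∧
      ∫ x in U, u x * f x =
        sSup ((fun w : EuclideanSpace ℝ (Fin n) → ℝ => ∫ x in U, w x * f x) ''
          {w | LipschitzWith 1 w ∧ ∀ x ∉ U, w x = 0}) := by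
  classical
  set A : Set (EuclideanSpace ℝ (Fin n) → ℝ) := {w | LipschitzWith 1 w ∧ ∀ x ∉ U, w x = 0} with hA
  set K : (EuclideanSpace ℝ (Fin n) → ℝ) → ℝ := fun w => ∫ x in U, w x * f x with hKdef
  haveI : Nonempty (Fin n) := ⟨⟨0, hn⟩⟩
  haveI : Nontrivial (EuclideanSpace ℝ (Fin n)) :=
    nontrivial_of_ne (EuclideanSpace.single ⟨0, hn⟩ (1 : ℝ)) 0 (by
      intro h
      have := congrArg norm h
      simp [EuclideanSpace.norm_single] at this)
  -- the complement of U is nonempty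
  obtain ⟨y₀, hy₀⟩ : (Uᶜ).Nonempty := by
    rw [Set.nonempty_compl]
    intro h
    rw [h] at hUbdd
    exact NormedSpace.unbounded_univ ℝ (EuclideanSpace ℝ (Fin n)) hUbdd
  obtain ⟨r, hr⟩ := (Metric.isBounded_iff_subset_closedBall y₀).mp hUbdd
  set M : ℝ := max r 0 with hM
  -- uniform bound on admissible functions
  have hbound : ∀ w ∈ A, ∀ x, |w x| ≤ M := by
    intro w hw x
    by_cases hx : x ∈ U
    · calc |w x| = dist (w x) (w y₀) := by
            rw [hw.2 y₀ hy₀, Real.dist_eq, sub_zero]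
      _ ≤ 1 * dist x y₀ := hw.1.dist_le_mul x y₀
      _ ≤ r := by
            have := hr hx
            rw [Metric.mem_closedBall] at this
            simpa using this
      _ ≤ M := le_max_left _ _
    · simp [hw.2 x hx, hM, le_max_right r 0]
  -- A is compact in the topology of pointwise convergence
  have hAcomp : IsCompact A := by
    have hsub : A ⊆ Set.univ.pi fun _ : EuclideanSpace ℝ (Fin n) => Set.Icc (-M) M := by
      intro w hw x _
      exact abs_le.mp (hbound w hw x)
    refine (isCompact_univ_pi fun _ => isCompact_Icc).of_isClosed_subset ?_ hsub
    have h1 : IsClosed {w : EuclideanSpace ℝ (Fin n) → ℝ | LipschitzWith 1 w} := by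
      have he : {w : EuclideanSpace ℝ (Fin n) → ℝ | LipschitzWith 1 w} =
          ⋂ (x) (y), {w : EuclideanSpace ℝ (Fin n) → ℝ | dist (w x) (w y) ≤ dist x y} := by
        ext w
        simp [lipschitzWith_iff_dist_le_mul]
      rw [he]
      exact isClosed_iInter fun x => isClosed_iInter fun y =>
        isClosed_le ((continuous_apply x).dist (continuous_apply y)) continuous_const
    have h2 : IsClosed {w : EuclideanSpace ℝ (Fin n) → ℝ | ∀ x ∉ U, w x = 0} := by
      have he : {w : EuclideanSpace ℝ (Fin n) → ℝ | ∀ x ∉ U, w x = 0} = ⋂ x ∈ Uᶜ, {w : EuclideanSpace ℝ (Fin n) → ℝ | w x = 0} := by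
        ext w; simp [Set.mem_compl_iff]
      rw [he]
      exact isClosed_biInter fun x _ =>
        isClosed_eq (continuous_apply x) continuous_const
    exact h1.inter h2
  -- integrability of w * f for admissible w
  have hint : ∀ w ∈ A, IntegrableOn (fun x => w x * f x) U := by
    intro w hw
    exact hf.bdd_mul hw.1.continuous.aestronglyMeasurable
      (c := M) (Filter.Eventually.of_forall fun x => by simpa [Real.norm_eq_abs] using hbound w hw x)
  -- K is continuous on A (for the topology of pointwise convergence)
  have hKcont : ContinuousOn K A := by
    intro w₀ hw₀
    rw [ContinuousWithinAt, Metric.tendsto_nhds]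
    intro ε hε
    set I : ℝ := ∫ x in U, |f x| with hI
    have hInn : 0 ≤ I := integral_nonneg fun x => abs_nonneg _
    set δ : ℝ := ε / (3 * (I + 1)) with hδdef
    have hδ : 0 < δ := div_pos hε (by positivity)
    obtain ⟨t, htfin, htsub⟩ := Metric.totallyBounded_iff.mp
      hUbdd.isCompact_closure.totallyBounded δ hδ
    have hV : {w : EuclideanSpace ℝ (Fin n) → ℝ | ∀ i ∈ t, dist (w i) (w₀ i) < δ} ∈ nhds w₀ := by
      have he : {w : EuclideanSpace ℝ (Fin n) → ℝ | ∀ i ∈ t, dist (w i) (w₀ i) < δ}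
          = ⋂ i ∈ t, (fun w : EuclideanSpace ℝ (Fin n) → ℝ => w i) ⁻¹' Metric.ball (w₀ i) δ := by
        ext w; simp [Metric.mem_ball]
      rw [he]
      exact (Filter.biInter_mem htfin).2 fun i _ =>
        (continuous_apply i).continuousAt.preimage_mem_nhds (Metric.ball_mem_nhds _ hδ)
    filter_upwards [nhdsWithin_le_nhds hV, self_mem_nhdsWithin] with w hwV hwA
    -- pointwise estimate on U
    have hptw : ∀ x ∈ U, |w x - w₀ x| ≤ 3 * δ := by
      intro x hx
      obtain ⟨i, hi, hxi⟩ : ∃ i ∈ t, x ∈ Metric.ball i δ := by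
        have := htsub (subset_closure hx)
        simpa using this
      rw [Metric.mem_ball] at hxi
      have d1 : dist (w x) (w i) ≤ dist x i := by
        simpa using hwA.1.dist_le_mul x i
      have d3 : dist (w₀ i) (w₀ x) ≤ dist i x := by
        simpa using hw₀.1.dist_le_mul i x
      calc |w x - w₀ x| = dist (w x) (w₀ x) := (Real.dist_eq _ _).symm
        _ ≤ dist (w x) (w i) + dist (w i) (w₀ i) + dist (w₀ i) (w₀ x) :=
            dist_triangle4 _ _ _ _
        _ ≤ δ + δ + δ := by
            have h2 := hwV i hi
            have h1 : dist (w x) (w i) ≤ δ := d1.trans hxi.le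
            have h3 : dist (w₀ i) (w₀ x) ≤ δ := by
              rw [dist_comm i x] at d3
              exact d3.trans hxi.le
            linarith
        _ = 3 * δ := by ring
    -- integral estimate
    have hdiff : K w - K w₀ = ∫ x in U, (w x - w₀ x) * f x := by
      rw [hKdef]
      simp only
      rw [← integral_sub (hint w hwA) (hint w₀ hw₀)]
      congr 1
      ext x
      ring
    have hintdiff : IntegrableOn (fun x => (w x - w₀ x) * f x) U :=
      hf.bdd_mul ((hwA.1.continuous.sub hw₀.1.continuous).aestronglyMeasurable)
        (c := 2 * M) (Filter.Eventually.of_forall fun x => by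
          have h1 := hbound w hwA x
          have h2 := hbound w₀ hw₀ x
          have := abs_sub (w x) (w₀ x)
          simp only [Real.norm_eq_abs]
          calc |w x - w₀ x| ≤ |w x| + |w₀ x| := abs_sub _ _
            _ ≤ 2 * M := by linarith)
    have key : dist (K w) (K w₀) ≤ 3 * δ * I := by
      rw [Real.dist_eq, hdiff]
      have habs : IntegrableOn (fun x => |w x - w₀ x| * |f x|) U := by
        have h := hintdiff.abs
        simp only [abs_mul] at h
        exact h
      calc |∫ x in U, (w x - w₀ x) * f x| ≤ ∫ x in U, |w x - w₀ x| * |f x| := by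
            simpa [Real.norm_eq_abs, abs_mul] using
              norm_integral_le_integral_norm (μ := volume.restrict U)
                (fun x => (w x - w₀ x) * f x)
        _ ≤ ∫ x in U, 3 * δ * |f x| := by
            refine setIntegral_mono_on habs
              ((hf.abs).const_mul (3 * δ)) hUopen.measurableSet ?_
            intro x hx
            exact mul_le_mul_of_nonneg_right (hptw x hx) (abs_nonneg _)
        _ = 3 * δ * I := by rw [integral_const_mul]
    have hfin : 3 * δ * (I + 1) = ε := by
      rw [hδdef]
      field_simp
    calc dist (K w) (K w₀) ≤ 3 * δ * I := key
      _ < 3 * δ * (I + 1) := by nlinarith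
      _ = ε := hfin
  -- existence of maximizer
  have hA0 : (0 : EuclideanSpace ℝ (Fin n) → ℝ) ∈ A := by
    constructor
    · intro x y
      simp
    · intro x _
      rfl
  obtain ⟨u, huA, humax⟩ := hAcomp.exists_isMaxOn ⟨0, hA0⟩ hKcont
  refine ⟨u, huA, ?_⟩
  have hgr : IsGreatest (K '' A) (K u) := by
    refine ⟨⟨u, huA, rfl⟩, ?_⟩
    rintro y ⟨w, hwA, rfl⟩
    exact humax hwA
  exact hgr.csSup_eq.symm
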